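/- arXiv:1902.06403 — 2 statements merged into one kernel-verified Lean document; each statement's English description precedes it below -/
import Mathlib

section
/- For every even s ≥ t and every k ≥ 1, there exists a k-connected balanced bipartite graph G such that G_B^t is not Hamiltonian. Concretely: let V_0, V_1, ..., V_{s+1} be disjoint vertex sets with |V_0| = |V_{s+1}| > sk/2 and |V_i| = k for 1 ≤ i ≤ s, and let G be the graph obtained by adding all edges between V_i and V_{i+1} for 0 ≤ i ≤ s; then G is k-connected, balanced bipartite, and V_0 ∪ V_{s+1} is an independent set in G_B^t of size exceeding |V(G)|/2, so G_B^t is not Hamiltonian. -/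
/-- The `t`-th bi-power of a graph `G`: two vertices are adjacent iff their
distance in `G` is odd and at most `t`. -/
def SimpleGraph.biPower {V : Type*} (G : SimpleGraph V) (t : ℕ) : SimpleGraph V where
  Adj x y := Odd (G.dist x y) ∧ G.dist x y ≤ t
  symm := ⟨fun x y h => by rwa [SimpleGraph.dist_comm]⟩
  loopless := ⟨fun x h => by simp [SimpleGraph.dist_self, Nat.odd_iff] at h⟩

/-- Sizes of the layers: the first and last layer have size `m`, the middle
layers have size `k`. -/
def layerSize (s k m : ℕ) (i : Fin (s + 2)) : ℕ :=
  if i = 0 ∨ i = Fin.last (s + 1) then m else k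

/-- The layered graph on `V_0, V_1, …, V_{s+1}` with all edges between
consecutive layers. -/
def layerGraph (s k m : ℕ) : SimpleGraph (Σ i : Fin (s + 2), Fin (layerSize s k m i)) where
  Adj a b := a.1.val + 1 = b.1.val ∨ b.1.val + 1 = a.1.val
  symm := ⟨fun a b h => h.symm⟩
  loopless := ⟨fun a h => by rcases h with h | h <;> omega⟩

/-- A graph is `k`-connected if it has more than `k` vertices and deleting any
set of fewer than `k` vertices leaves a connected graph. -/
def KConnected {V : Type*} [Fintype V] (G : SimpleGraph V) (k : ℕ) : Prop :=
  k < Fintype.card V ∧ ∀ S : Finset V, S.card < k → (G.induce ((S : Set V)ᶜ)).Connected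

open SimpleGraph


lemma no_ham_of_indep {V : Type*} [Fintype V] [DecidableEq V] (G : SimpleGraph V) (I : Set V)
    (hI : I.Pairwise (fun u v => ¬ G.Adj u v))
    (hbig : 2 * I.ncard > Fintype.card V) (hone : Fintype.card V ≠ 1) :
    ¬ G.IsHamiltonian := by
  classical
  intro h
  obtain ⟨a, p, hp⟩ := h hone
  have hnn := hp.isCycle.not_nil
  set l := p.support.tail with hl
  have hcount : ∀ v, l.count v = 1 := by
    intro v
    have := hp.isHamiltonian_tail v
    rwa [SimpleGraph.Walk.support_tail_of_not_nil _ hnn] at this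
  have hnodl : l.Nodup := List.nodup_iff_count_le_one.2 fun v => (hcount v).le
  have hmeml : ∀ v, v ∈ l := fun v => List.count_pos_iff.1 (by rw [hcount v]; norm_num)
  have hlne : l ≠ [] := fun h => by simpa [h] using hmeml a
  have happ := Walk.map_fst_darts_append p
  have hcons : p.support = a :: l := Walk.support_eq_cons p
  have hsnd : p.darts.map (·.snd) = l := Walk.map_snd_darts p
  have hfst : p.darts.map (·.fst) = a :: l.dropLast := by
    have h2 : (p.darts.map (·.fst) ++ [a]).dropLast = (a :: l).dropLast := by
      rw [happ, hcons]
    rwa [List.dropLast_concat, List.dropLast_cons_of_ne_nil hlne] at h2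
  have hdecomp : l.dropLast ++ [a] = l := by
    have h3 : a :: l = (a :: l.dropLast) ++ [a] := by rw [← hfst, happ, hcons]
    rw [List.cons_append] at h3
    exact (List.cons_injective h3).symm
  have hna : a ∉ l.dropLast := by
    intro hmem
    have h4 := hnodl
    rw [← hdecomp] at h4
    exact (List.disjoint_of_nodup_append h4) hmem (List.mem_singleton_self a)
  have hfst_nodup : (p.darts.map (·.fst)).Nodup := by
    rw [hfst]
    exact List.nodup_cons.2 ⟨hna, hnodl.sublist (List.dropLast_sublist l)⟩
  have hsnd_nodup : (p.darts.map (·.snd)).Nodup := by rw [hsnd]; exact hnodl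
  have hfst_mem : ∀ v, v ∈ p.darts.map (·.fst) := by
    intro v
    rw [hfst]
    rcases eq_or_ne v a with rfl | hv
    · exact List.mem_cons_self
    · have h5 := hmeml v
      rw [← hdecomp] at h5
      rcases List.mem_append.1 h5 with h' | h'
      · exact List.mem_cons_of_mem _ h'
      · simp at h'; exact absurd h' hv
  have hsnd_mem : ∀ v, v ∈ p.darts.map (·.snd) := by rw [hsnd]; exact hmeml
  have hdnodup : p.darts.Nodup := hfst_nodup.of_map _
  set D := p.darts.toFinset with hD
  have hDcard : D.card = Fintype.card V := by
    rw [hD, List.toFinset_card_of_nodup hdnodup, Walk.length_darts]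
    exact hp.length_eq
  set A := D.filter (fun d => d.snd ∈ I) with hA
  set B := D.filter (fun d => d.fst ∈ I) with hB
  have hdisj : Disjoint A B := by
    rw [Finset.disjoint_left]
    intro d hdA hdB
    simp only [hA, hB, Finset.mem_filter] at hdA hdB
    have hadj := d.adj
    exact hI hdB.2 hdA.2 hadj.ne hadj
  have cardmap : ∀ (f : G.Dart → V), (p.darts.map f).Nodup → (∀ v, v ∈ p.darts.map f) →
      (D.filter (fun d => f d ∈ I)).card = I.ncard := by
    intro f hfn hfm
    rw [Set.ncard_eq_toFinset_card']
    rw [← Finset.card_image_of_injOn (f := f) (s := D.filter (fun d => f d ∈ I)) ?_]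
    · congr 1
      ext v
      simp only [Finset.mem_image, Finset.mem_filter, Set.mem_toFinset, hD, List.mem_toFinset]
      constructor
      · rintro ⟨d, ⟨_, hdI⟩, rfl⟩; exact hdI
      · intro hv
        obtain ⟨d, hd, rfl⟩ := List.mem_map.1 (hfm v)
        exact ⟨d, ⟨hd, hv⟩, rfl⟩
    · intro d1 h1 d2 h2 heq
      simp only [Finset.coe_filter, Set.mem_setOf_eq, hD, List.mem_toFinset] at h1 h2
      exact List.inj_on_of_nodup_map hfn h1.1 h2.1 heq
  have hAcard : A.card = I.ncard := cardmap _ hsnd_nodup hsnd_mem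
  have hBcard : B.card = I.ncard := cardmap _ hfst_nodup hfst_mem
  have hU : (A ∪ B).card = A.card + B.card := Finset.card_union_of_disjoint hdisj
  have hsub : A ∪ B ⊆ D :=
    Finset.union_subset (Finset.filter_subset _ _) (Finset.filter_subset _ _)
  have hle := Finset.card_le_card hsub
  omega

namespace LayerAux

abbrev Vt (s k m : ℕ) := Σ i : Fin (s + 2), Fin (layerSize s k m i)

variable {s k m : ℕ}

lemma layerSize_val (i : Fin (s + 2)) :
    layerSize s k m i = if i.val = 0 ∨ i.val = s + 1 then m else k := by
  simp only [layerSize, Fin.ext_iff, Fin.val_last, Fin.val_zero]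

lemma walk_bound {u v : Vt s k m} (p : (layerGraph s k m).Walk u v) :
    v.1.val ≤ u.1.val + p.length ∧ u.1.val ≤ v.1.val + p.length ∧
      (u.1.val + v.1.val + p.length) % 2 = 0 := by
  induction p with
  | nil => refine ⟨?_, ?_, ?_⟩ <;> simp only [SimpleGraph.Walk.length_nil] <;> omega
  | cons h q ih =>
      obtain ⟨h1, h2, h3⟩ := ih
      simp only [SimpleGraph.Walk.length_cons]; rcases h with h | h <;> omega

lemma card_Vt : Fintype.card (Vt s k m) = 2 * m + s * k := by
  classical
  rw [Fintype.card_sigma]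
  simp only [Fintype.card_fin]
  have h1 : (Finset.univ.filter (fun i : Fin (s+2) => i = 0 ∨ i = Fin.last (s+1))) =
      {0, Fin.last (s+1)} := by
    ext i; simp [Finset.mem_filter, Finset.mem_insert]
  have h0ne : (0 : Fin (s+2)) ≠ Fin.last (s+1) := by
    simp [Fin.ext_iff]
  have h2 : (Finset.univ.filter (fun i : Fin (s+2) => i = 0 ∨ i = Fin.last (s+1))).card = 2 := by
    rw [h1, Finset.card_insert_of_notMem (by simpa using h0ne), Finset.card_singleton]
  have h3 := Finset.card_filter_add_card_filter_not
    (s := (Finset.univ : Finset (Fin (s+2)))) (p := fun i => i = 0 ∨ i = Fin.last (s+1))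
  rw [Finset.card_univ, Fintype.card_fin] at h3
  unfold layerSize
  rw [Finset.sum_ite, Finset.sum_const, Finset.sum_const, smul_eq_mul, smul_eq_mul, h2]
  have h4 : (Finset.univ.filter (fun i : Fin (s+2) => ¬(i = 0 ∨ i = Fin.last (s+1)))).card = s := by
    omega
  rw [h4]

lemma ncard_I : ({a : Vt s k m | a.1 = 0 ∨ a.1 = Fin.last (s + 1)}).ncard = 2 * m := by
  classical
  have hset : {a : Vt s k m | a.1 = 0 ∨ a.1 = Fin.last (s + 1)} =
      (Sigma.mk (0 : Fin (s+2)) '' Set.univ) ∪ (Sigma.mk (Fin.last (s+1)) '' Set.univ) := by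
    ext ⟨i, x⟩
    constructor
    · rintro (rfl | rfl)
      · exact Or.inl ⟨x, trivial, rfl⟩
      · exact Or.inr ⟨x, trivial, rfl⟩
    · rintro (⟨y, -, h⟩ | ⟨y, -, h⟩)
      · exact Or.inl (congrArg Sigma.fst h).symm
      · exact Or.inr (congrArg Sigma.fst h).symm
  rw [hset, Set.ncard_union_eq ?_ (Set.toFinite _) (Set.toFinite _)]
  · rw [Set.ncard_image_of_injective _ sigma_mk_injective,
        Set.ncard_image_of_injective _ sigma_mk_injective, Set.ncard_univ, Set.ncard_univ,
        Nat.card_eq_fintype_card, Nat.card_eq_fintype_card, Fintype.card_fin, Fintype.card_fin]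
    have e0 : layerSize s k m 0 = m := by simp [layerSize]
    have e1 : layerSize s k m (Fin.last (s+1)) = m := by simp [layerSize]
    rw [e0, e1]; ring
  · rw [Set.disjoint_left]
    rintro ⟨i, x⟩ ⟨y, -, h⟩ ⟨z, -, h'⟩
    have h0 := congrArg Sigma.fst h
    have h1 := congrArg Sigma.fst h'
    simp only at h0 h1
    rw [← h0] at h1
    simp [Fin.ext_iff] at h1

def sigmaVal (s n : ℕ) : ℕ :=
  if n = 0 then s + 1 else if n = s + 1 then 0 else if n % 2 = 0 then n - 1 else n + 1

lemma sigmaVal_lt {n : ℕ} (hn : n < s + 2) : sigmaVal s n < s + 2 := by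
  unfold sigmaVal; split_ifs <;> first | contradiction | omega

lemma sigmaVal_invol (hs2 : s % 2 = 0) {n : ℕ} (hn : n < s + 2) :
    sigmaVal s (sigmaVal s n) = n := by
  unfold sigmaVal; split_ifs <;> first | contradiction | omega

lemma sigmaVal_parity (hs2 : s % 2 = 0) {n : ℕ} (hn : n < s + 2) :
    (n + sigmaVal s n) % 2 = 1 := by
  unfold sigmaVal; split_ifs <;> first | contradiction | omega

lemma layerSize_sigmaVal (hs2 : s % 2 = 0) (i : Fin (s + 2)) :
    layerSize s k m (⟨sigmaVal s i.val, sigmaVal_lt i.isLt⟩ : Fin (s + 2)) =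
      layerSize s k m i := by
  rw [layerSize_val, layerSize_val]
  have hn := i.isLt
  have key : ((⟨sigmaVal s i.val, sigmaVal_lt i.isLt⟩ : Fin (s + 2)).val = 0 ∨
      (⟨sigmaVal s i.val, sigmaVal_lt i.isLt⟩ : Fin (s + 2)).val = s + 1) ↔
      (i.val = 0 ∨ i.val = s + 1) := by
    show (sigmaVal s i.val = 0 ∨ sigmaVal s i.val = s + 1) ↔ _
    unfold sigmaVal
    split_ifs <;> (try simp only [false_or, or_false, true_or, true_iff]) <;> omega
  rw [if_congr key rfl rfl]

def flipMap (hs2 : s % 2 = 0) : Vt s k m → Vt s k m :=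
  fun a => ⟨⟨sigmaVal s a.1.val, sigmaVal_lt a.1.isLt⟩,
    Fin.cast (layerSize_sigmaVal hs2 a.1).symm a.2⟩

lemma Vt_ext {a b : Vt s k m} (h1 : a.1.val = b.1.val) (h2 : a.2.val = b.2.val) : a = b := by
  obtain ⟨i, x⟩ := a; obtain ⟨j, y⟩ := b
  simp only at h1 h2
  have : i = j := Fin.ext h1
  subst this
  exact congrArg _ (Fin.ext h2)

lemma flipMap_invol (hs2 : s % 2 = 0) : Function.Involutive (flipMap (s := s) (k := k) (m := m) hs2) := by
  intro a
  apply Vt_ext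
  · exact sigmaVal_invol hs2 a.1.isLt
  · rfl

lemma ncard_XY (hs2 : s % 2 = 0) :
    ({a : Vt s k m | a.1.val % 2 = 0}).ncard = ({a : Vt s k m | a.1.val % 2 = 1}).ncard := by
  have himg : flipMap (s := s) (k := k) (m := m) hs2 '' {a | a.1.val % 2 = 0} =
      {a | a.1.val % 2 = 1} := by
    ext b
    constructor
    · rintro ⟨a, ha, rfl⟩
      have := sigmaVal_parity hs2 a.1.isLt
      simp only [Set.mem_setOf_eq] at ha ⊢
      show sigmaVal s a.1.val % 2 = 1
      omega
    · intro hb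
      refine ⟨flipMap hs2 b, ?_, flipMap_invol hs2 b⟩
      have := sigmaVal_parity hs2 b.1.isLt
      simp only [Set.mem_setOf_eq] at hb ⊢
      show sigmaVal s b.1.val % 2 = 0
      omega
  rw [← himg, Set.ncard_image_of_injective _ (flipMap_invol hs2).injective]

lemma layer_connected (hmk : k ≤ m) (S : Finset (Vt s k m)) (hS : S.card < k) :
    ((layerGraph s k m).induce ((S : Set (Vt s k m))ᶜ)).Connected := by
  classical
  have hsize : ∀ i : Fin (s+2), S.card < layerSize s k m i := by
    intro i; unfold layerSize; split <;> omega
  have hex : ∀ i : Fin (s+2), ∃ x, (⟨i, x⟩ : Vt s k m) ∉ S := by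
    intro i
    by_contra hc
    push_neg at hc
    have hle : (Finset.univ : Finset (Fin (layerSize s k m i))).card ≤ S.card :=
      Finset.card_le_card_of_injOn (fun x => (⟨i, x⟩ : Vt s k m)) (fun x _ => hc x)
        (fun x _ y _ h => by simpa using h)
    rw [Finset.card_univ, Fintype.card_fin] at hle
    exact absurd hle (by have := hsize i; omega)
  choose w hw using hex
  set G' := (layerGraph s k m).induce ((S : Set (Vt s k m))ᶜ) with hG'
  have hWmem : ∀ i : Fin (s+2), (⟨i, w i⟩ : Vt s k m) ∈ ((S : Set (Vt s k m))ᶜ) := by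
    intro i; simpa using hw i
  set W : ∀ i : Fin (s+2), ((S : Set (Vt s k m))ᶜ : Set (Vt s k m)) :=
    fun i => ⟨⟨i, w i⟩, hWmem i⟩ with hWdef
  have hadjW : ∀ (a b : ((S : Set (Vt s k m))ᶜ : Set (Vt s k m))),
      ((a.1.1.val + 1 = b.1.1.val) ∨ (b.1.1.val + 1 = a.1.1.val)) → G'.Adj a b := by
    intro a b hab
    exact hab
  have chain : ∀ n (hn : n < s + 2), G'.Reachable (W ⟨0, by omega⟩) (W ⟨n, hn⟩) := by
    intro n
    induction n with
    | zero => intro hn; exact SimpleGraph.Reachable.refl _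
    | succ n ih =>
        intro hn
        have hn' : n < s + 2 := by omega
        have hadj : G'.Adj (W ⟨n, hn'⟩) (W ⟨n+1, hn⟩) := hadjW _ _ (Or.inl rfl)
        exact (ih hn').trans hadj.reachable
  have reach : ∀ v : ((S : Set (Vt s k m))ᶜ : Set (Vt s k m)),
      G'.Reachable (W ⟨0, by omega⟩) v := by
    rintro ⟨⟨i, x⟩, hv⟩
    by_cases hi : i.val = s + 1
    · have hadj : G'.Adj (W ⟨s, by omega⟩) ⟨⟨i, x⟩, hv⟩ := hadjW _ _ (Or.inl hi.symm)
      exact (chain s (by omega)).trans hadj.reachable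
    · have hi' : i.val + 1 < s + 2 := by omega
      have hadj : G'.Adj (W ⟨i.val + 1, hi'⟩) ⟨⟨i, x⟩, hv⟩ := hadjW _ _ (Or.inr rfl)
      exact (chain _ hi').trans hadj.reachable
  haveI : Nonempty (((S : Set (Vt s k m))ᶜ : Set (Vt s k m))) := ⟨W ⟨0, by omega⟩⟩
  exact SimpleGraph.Connected.mk (fun u v => (reach u).symm.trans (reach v))

end LayerAux

/-- For every even `s ≥ t` (with `t, k ≥ 1`) the concrete layered graph `G`
with `|V_0| = |V_{s+1}| = m > sk/2` and `|V_i| = k` (`1 ≤ i ≤ s`) is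
`k`-connected and balanced bipartite, `V_0 ∪ V_{s+1}` is an independent set
of `G_B^t` of size exceeding `|V(G)|/2`, and `G_B^t` is not Hamiltonian.  In
particular, for every even `s ≥ t` and `k ≥ 1` there is a `k`-connected
balanced bipartite graph whose `t`-th bi-power is not Hamiltonian. -/
theorem layerGraph_not_hamiltonian (t s k m : ℕ)
    (ht : 1 ≤ t) (hts : t ≤ s) (hs : Even s) (hk : 1 ≤ k) (hm : s * k < 2 * m) :
    KConnected (layerGraph s k m) k ∧
    (∃ X Y : Set (Σ i : Fin (s + 2), Fin (layerSize s k m i)),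
      (∀ v, v ∈ X ∨ v ∈ Y) ∧ Disjoint X Y ∧ X.ncard = Y.ncard ∧
      (∀ u v, (layerGraph s k m).Adj u v → (u ∈ X ∧ v ∈ Y) ∨ (u ∈ Y ∧ v ∈ X))) ∧
    ({a : Σ i : Fin (s + 2), Fin (layerSize s k m i) | a.1 = 0 ∨ a.1 = Fin.last (s + 1)}.Pairwise
      (fun u v => ¬ ((layerGraph s k m).biPower t).Adj u v)) ∧
    2 * {a : Σ i : Fin (s + 2), Fin (layerSize s k m i) | a.1 = 0 ∨ a.1 = Fin.last (s + 1)}.ncard >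
      Fintype.card (Σ i : Fin (s + 2), Fin (layerSize s k m i)) ∧
    ¬ ((layerGraph s k m).biPower t).IsHamiltonian := by
  classical
  have hs2 : s % 2 = 0 := Nat.even_iff.mp hs
  have hs2' : 2 ≤ s := by omega
  have h2k : 2 * k ≤ s * k := Nat.mul_le_mul_right k hs2'
  have hmk : k ≤ m := by omega
  have hindep : ({a : LayerAux.Vt s k m | a.1 = 0 ∨ a.1 = Fin.last (s + 1)}).Pairwise
      (fun u v => ¬ ((layerGraph s k m).biPower t).Adj u v) := by
    intro u hu v hv huv hadj
    obtain ⟨hodd, hle⟩ := hadj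
    rw [Nat.odd_iff] at hodd
    have hne : (layerGraph s k m).dist u v ≠ 0 := by
      intro h; rw [h] at hodd; simp at hodd
    obtain ⟨p, hp⟩ := SimpleGraph.exists_walk_of_dist_ne_zero hne
    obtain ⟨h1, h2, h3⟩ := LayerAux.walk_bound p
    rw [hp] at h1 h2 h3
    have hu' : u.1.val = 0 ∨ u.1.val = s + 1 := by
      rcases hu with h | h
      · left; rw [h]; rfl
      · right; rw [h]; rfl
    have hv' : v.1.val = 0 ∨ v.1.val = s + 1 := by
      rcases hv with h | h
      · left; rw [h]; rfl
      · right; rw [h]; rfl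
    rcases hu' with h | h <;> rcases hv' with h' | h' <;> omega
  refine ⟨⟨?_, fun S hS => LayerAux.layer_connected hmk S hS⟩, ?_, hindep, ?_, ?_⟩
  · rw [LayerAux.card_Vt]; omega
  · refine ⟨{a | a.1.val % 2 = 0}, {a | a.1.val % 2 = 1}, ?_, ?_, LayerAux.ncard_XY hs2, ?_⟩
    · intro v
      by_cases h : v.1.val % 2 = 0
      · exact Or.inl h
      · exact Or.inr (by show v.1.val % 2 = 1; omega)
    · rw [Set.disjoint_left]
      intro a ha ha'
      have h1 : a.1.val % 2 = 0 := ha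
      have h2 : a.1.val % 2 = 1 := ha'
      omega
    · intro u v hadj
      have hor : u.1.val + 1 = v.1.val ∨ v.1.val + 1 = u.1.val := hadj
      by_cases h : u.1.val % 2 = 0
      · exact Or.inl ⟨h, by show v.1.val % 2 = 1; omega⟩
      · exact Or.inr ⟨by show u.1.val % 2 = 1; omega, by show v.1.val % 2 = 0; omega⟩
  · rw [LayerAux.ncard_I, LayerAux.card_Vt]; omega
  · refine no_ham_of_indep _ _ hindep ?_ ?_
    · rw [LayerAux.ncard_I, LayerAux.card_Vt]; omega
    · rw [LayerAux.card_Vt]; omega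
end

section
/- Let T be a finite tree with a perfect matching M, xy ∈ M, and let H be a component of T − {x, y} with a neighbor of x. Then M restricted to H is a perfect matching of H, and there exists an edge x'y' ∈ M with x', y' ∈ V(H) such that y' is adjacent to x in T. -/
/-- The graph obtained from `G` by deleting the vertices in `s` (keeping the
vertex type, the deleted vertices become isolated). -/
def SimpleGraph.removeVerts {V : Type*} (G : SimpleGraph V) (s : Set V) : SimpleGraph V where
  Adj a b := G.Adj a b ∧ a ∉ s ∧ b ∉ s
  symm := ⟨fun a b h => by
    exact ⟨h.1.symm, h.2.2, h.2.1⟩⟩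
  loopless := ⟨fun a h => G.loopless.irrefl a h.1⟩

/-- Let `T` be a finite tree with a perfect matching `M`, `xy ∈ M`, and let
`H` be a component of `T - {x, y}` containing a neighbour of `x`.  Then `M`
restricted to `H` is a perfect matching of `H` (every vertex of `H` is matched
within `H`), and there is an edge `x'y' ∈ M` with `x', y' ∈ H` such that `y'`
is adjacent to `x` in `T`. -/
theorem component_matching_edge {V : Type*} [Fintype V]
    (T : SimpleGraph V) (hT : T.IsTree) (M : T.Subgraph) (hM : M.IsPerfectMatching)
    (x y : V) (hxy : M.Adj x y)
    (a : V) (hax : a ≠ x) (hay : a ≠ y)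
    (H : Set V) (hH : H = {b | (T.removeVerts {x, y}).Reachable a b})
    (hnbr : ∃ v ∈ H, T.Adj x v) :
    (∀ v ∈ H, ∃ w ∈ H, M.Adj v w) ∧
    (∃ x' y' : V, x' ∈ H ∧ y' ∈ H ∧ M.Adj x' y' ∧ T.Adj x y') := by
  have hnotin : ∀ v ∈ H, v ∉ ({x, y} : Set V) := by
    intro v hv
    rw [hH] at hv
    obtain ⟨p⟩ := hv.symm
    cases p with
    | nil => simp [hax, hay]
    | cons h _ => exact h.2.1
  have key : ∀ v ∈ H, ∃ w ∈ H, M.Adj v w := by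
    intro v hv
    have hvx : v ∉ ({x, y} : Set V) := hnotin v hv
    obtain ⟨w, hw, hwuniq⟩ := hM.1 (hM.2 v)
    refine ⟨w, ?_, hw⟩
    have hwx : w ≠ x := by
      intro h; rw [h] at hw
      obtain ⟨w', hw', hwu'⟩ := hM.1 (hM.2 x)
      have h1 := hwu' v hw.symm
      have h2 := hwu' y hxy
      exact hvx (by simp [h1, h2])
    have hwy : w ≠ y := by
      intro h; rw [h] at hw
      obtain ⟨w', hw', hwu'⟩ := hM.1 (hM.2 y)
      have h1 := hwu' v hw.symm
      have h2 := hwu' x hxy.symm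
      exact hvx (by simp [h1, h2])
    have hadj : (T.removeVerts {x, y}).Adj v w :=
      ⟨M.adj_sub hw, hvx, by simp [hwx, hwy]⟩
    rw [hH] at hv ⊢
    exact hv.trans hadj.reachable
  refine ⟨key, ?_⟩
  obtain ⟨v, hv, hxv⟩ := hnbr
  obtain ⟨w, hwH, hvw⟩ := key v hv
  exact ⟨w, v, hwH, hv, hvw.symm, hxv⟩
end
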